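/- Under the with-ties trapezoidal formula, the AUROC equals (number of pairs (positive, negative) with the positive scored strictly higher) plus one half times (number of tied positive-negative pairs), all divided by P·N. Formally: let M ≥ 1, scores s : Fin M → ℚ, labels y : Fin M → {0,1}, P = #{i : y(i)=1} > 0, N = #{i : y(i)=0} > 0. Then ∑ over distinct thresholds of [T_prev·ΔF + ΔT·ΔF/2] divided by P·N equals (#{(i,j) : y(i)=1, y(j)=0, s(i) > s(j)} + (1/2)·#{(i,j) : y(i)=1, y(j)=0, s(i) = s(j)}) / (P·N), where T and F are the cumulative counts of positives and negatives evaluated at each distinct score threshold (sorted descending), T_prev and F_prev are the values at the previous threshold, ΔT = T - T_prev and ΔF = F - F_prev. -/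

import Mathlib

open Finset

lemma desc_le {l : List ℚ} (hs : l.Pairwise (· > ·)) {i j : ℕ}
    (hj : j < l.length) (hij : i ≤ j) : l[j] ≤ l[(i : ℕ)]'(lt_of_le_of_lt hij hj) := by
  rcases eq_or_lt_of_le hij with rfl | h
  · exact le_refl _
  · exact le_of_lt (hs.rel_get_of_lt (a := ⟨i, lt_of_le_of_lt hij hj⟩) (b := ⟨j, hj⟩) h)

lemma desc_max {l : List ℚ} (hs : l.Pairwise (· > ·)) {a : ℚ} (ha : a ∈ l)
    (h0 : 0 < l.length) : a ≤ l.getD 0 0 := by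
  obtain ⟨⟨j, hj⟩, rfl⟩ := List.mem_iff_get.1 ha
  rw [List.getD_eq_getElem _ _ h0]
  simpa using desc_le hs hj (Nat.zero_le j)

lemma desc_step {l : List ℚ} (hs : l.Pairwise (· > ·)) {a : ℚ} (ha : a ∈ l)
    {k : ℕ} (hk : k + 1 < l.length) : l.getD (k+1) 0 < a ↔ l.getD k 0 ≤ a := by
  have hk' : k < l.length := Nat.lt_of_succ_lt hk
  rw [List.getD_eq_getElem _ _ hk, List.getD_eq_getElem _ _ hk']
  obtain ⟨⟨j, hj⟩, rfl⟩ := List.mem_iff_get.1 ha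
  simp only [List.get_eq_getElem]
  constructor
  · intro h
    have hjk : j ≤ k := by
      by_contra hc
      push_neg at hc
      exact absurd (desc_le hs hj hc) (not_le.2 h)
    exact desc_le hs hk' hjk
  · intro h
    exact lt_of_lt_of_le (hs.rel_get_of_lt (a := ⟨k, hk'⟩) (b := ⟨k+1, hk⟩) (by simp)) h

lemma sum_range_getD (F : ℚ → ℚ) (l : List ℚ) (hnd : l.Nodup) :
    ∑ k ∈ range l.length, F (l.getD k 0) = ∑ a ∈ l.toFinset, F a := by
  induction l with
  | nil => simp
  | cons a l ih =>
    rw [List.length_cons, Finset.sum_range_succ']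
    simp only [List.getD_cons_succ, List.getD_cons_zero]
    rw [ih (List.nodup_cons.1 hnd).2, List.toFinset_cons,
      Finset.sum_insert (by simpa using (List.nodup_cons.1 hnd).1)]
    ring

theorem auroc_with_ties_wmw (M : ℕ) (hM : 1 ≤ M) (s : Fin M → ℚ) (y : Fin M → ℕ)
    (hy : ∀ i, y i = 0 ∨ y i = 1)
    (P N : ℕ) (hP : P = (univ.filter (fun i => y i = 1)).card)
    (hN : N = (univ.filter (fun i => y i = 0)).card)
    (hPpos : 0 < P) (hNpos : 0 < N)
    (l : List ℚ) (hl : l = ((univ.image s).sort (· ≤ ·)).reverse)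
    (Tat Fat : ℚ → ℕ)
    (hTat : ∀ v, Tat v = (univ.filter (fun i => y i = 1 ∧ v ≤ s i)).card)
    (hFat : ∀ v, Fat v = (univ.filter (fun i => y i = 0 ∧ v ≤ s i)).card)
    (Tprev Fprev : ℕ → ℕ)
    (hTprev : ∀ k, Tprev k = if k = 0 then 0 else Tat (l.getD (k - 1) 0))
    (hFprev : ∀ k, Fprev k = if k = 0 then 0 else Fat (l.getD (k - 1) 0)) :
    (∑ k ∈ range l.length,
        ((Tprev k : ℚ) * ((Fat (l.getD k 0) : ℚ) - (Fprev k : ℚ))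
          + ((Tat (l.getD k 0) : ℚ) - (Tprev k : ℚ))
              * ((Fat (l.getD k 0) : ℚ) - (Fprev k : ℚ)) / 2)) / (P * N)
      = (((univ.filter
              (fun p : Fin M × Fin M => y p.1 = 1 ∧ y p.2 = 0 ∧ s p.1 > s p.2)).card : ℚ)
          + (1 / 2)
            * ((univ.filter
                (fun p : Fin M × Fin M => y p.1 = 1 ∧ y p.2 = 0 ∧ s p.1 = s p.2)).card : ℚ))
        / (P * N) := by
  -- basic facts about l
  have hmem : ∀ a, a ∈ l ↔ a ∈ univ.image s := by
    intro a; rw [hl]; simp [Finset.mem_sort]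
  have hnd : l.Nodup := by
    rw [hl]; exact List.nodup_reverse.2 (Finset.sort_nodup _ _)
  have hsort : l.Pairwise (· > ·) := by
    rw [hl]
    exact List.pairwise_reverse.2 (by simpa [flip] using List.sortedLT_iff_pairwise.1 (Finset.sortedLT_sort (univ.image s)))
  have hsl : ∀ i, s i ∈ l := fun i => (hmem _).2 (mem_image_of_mem s (mem_univ i))
  -- auxiliary count functions
  set A : ℚ → ℕ := fun v => (univ.filter (fun i => y i = 1 ∧ v < s i)).card with hA
  set B : ℚ → ℕ := fun v => (univ.filter (fun i => y i = 0 ∧ s i = v)).card with hB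
  set C : ℚ → ℕ := fun v => (univ.filter (fun i => y i = 1 ∧ s i = v)).card with hC
  set D : ℚ → ℕ := fun v => (univ.filter (fun i => y i = 0 ∧ v < s i)).card with hD
  -- split of Tat / Fat
  have hTsplit : ∀ v, Tat v = A v + C v := by
    intro v
    rw [hTat, hA, hC]
    rw [show (univ.filter (fun i => y i = 1 ∧ v ≤ s i))
        = (univ.filter (fun i => y i = 1 ∧ v < s i)) ∪ (univ.filter (fun i => y i = 1 ∧ s i = v)) by
      rw [← filter_or]
      apply filter_congr
      intro i _
      constructor
      · rintro ⟨h1, h2⟩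
        rcases lt_or_eq_of_le h2 with h | h
        · exact Or.inl ⟨h1, h⟩
        · exact Or.inr ⟨h1, h.symm⟩
      · rintro (⟨h1, h2⟩ | ⟨h1, h2⟩); exacts [⟨h1, h2.le⟩, ⟨h1, h2.ge⟩]]
    apply card_union_of_disjoint
    rw [Finset.disjoint_left]
    rintro i hi1 hi2
    simp only [mem_filter] at hi1 hi2
    exact absurd hi2.2.2 (ne_of_gt hi1.2.2)
  have hFsplit : ∀ v, Fat v = D v + B v := by
    intro v
    rw [hFat, hD, hB]
    rw [show (univ.filter (fun i => y i = 0 ∧ v ≤ s i))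
        = (univ.filter (fun i => y i = 0 ∧ v < s i)) ∪ (univ.filter (fun i => y i = 0 ∧ s i = v)) by
      rw [← filter_or]
      apply filter_congr
      intro i _
      constructor
      · rintro ⟨h1, h2⟩
        rcases lt_or_eq_of_le h2 with h | h
        · exact Or.inl ⟨h1, h⟩
        · exact Or.inr ⟨h1, h.symm⟩
      · rintro (⟨h1, h2⟩ | ⟨h1, h2⟩); exacts [⟨h1, h2.le⟩, ⟨h1, h2.ge⟩]]
    apply card_union_of_disjoint
    rw [Finset.disjoint_left]
    rintro i hi1 hi2
    simp only [mem_filter] at hi1 hi2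
    exact absurd hi2.2.2 (ne_of_gt hi1.2.2)
  -- Tprev/Fprev identification
  have hTp : ∀ k < l.length, Tprev k = A (l.getD k 0) := by
    intro k hk
    rw [hTprev]
    cases k with
    | zero =>
      rw [if_pos rfl]
      symm
      simp only [hA]
      rw [Finset.card_eq_zero, Finset.filter_eq_empty_iff]
      intro i _
      rintro ⟨_, h2⟩
      exact absurd (desc_max hsort (hsl i) hk) (not_le.2 h2)
    | succ k =>
      rw [if_neg (Nat.succ_ne_zero k), Nat.add_sub_cancel, hTat]
      simp only [hA]
      congr 1
      apply filter_congr
      intro i _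
      constructor
      · rintro ⟨h1, h2⟩; exact ⟨h1, (desc_step hsort (hsl i) hk).2 h2⟩
      · rintro ⟨h1, h2⟩; exact ⟨h1, (desc_step hsort (hsl i) hk).1 h2⟩
  have hFp : ∀ k < l.length, Fprev k = D (l.getD k 0) := by
    intro k hk
    rw [hFprev]
    cases k with
    | zero =>
      rw [if_pos rfl]
      symm
      simp only [hD]
      rw [Finset.card_eq_zero, Finset.filter_eq_empty_iff]
      intro i _
      rintro ⟨_, h2⟩
      exact absurd (desc_max hsort (hsl i) hk) (not_le.2 h2)
    | succ k =>
      rw [if_neg (Nat.succ_ne_zero k), Nat.add_sub_cancel, hFat]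
      simp only [hD]
      congr 1
      apply filter_congr
      intro i _
      constructor
      · rintro ⟨h1, h2⟩; exact ⟨h1, (desc_step hsort (hsl i) hk).2 h2⟩
      · rintro ⟨h1, h2⟩; exact ⟨h1, (desc_step hsort (hsl i) hk).1 h2⟩
  -- rewrite the sum
  congr 1
  have hsum : (∑ k ∈ range l.length,
        ((Tprev k : ℚ) * ((Fat (l.getD k 0) : ℚ) - (Fprev k : ℚ))
          + ((Tat (l.getD k 0) : ℚ) - (Tprev k : ℚ))
              * ((Fat (l.getD k 0) : ℚ) - (Fprev k : ℚ)) / 2))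
      = ∑ k ∈ range l.length,
          ((A (l.getD k 0) : ℚ) * (B (l.getD k 0) : ℚ)
            + (C (l.getD k 0) : ℚ) * (B (l.getD k 0) : ℚ) / 2) := by
    apply Finset.sum_congr rfl
    intro k hk
    rw [mem_range] at hk
    rw [hTp k hk, hFp k hk, hTsplit, hFsplit]
    push_cast
    ring
  have htf : l.toFinset = univ.image s := by
    ext a; rw [List.mem_toFinset, hmem]
  have hsum2 : (∑ k ∈ range l.length,
          ((A (l.getD k 0) : ℚ) * (B (l.getD k 0) : ℚ)
            + (C (l.getD k 0) : ℚ) * (B (l.getD k 0) : ℚ) / 2))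
      = ∑ a ∈ univ.image s, ((A a : ℚ) * (B a : ℚ) + (C a : ℚ) * (B a : ℚ) / 2) := by
    rw [← htf]
    exact sum_range_getD (fun v => ((A v : ℚ) * (B v : ℚ) + (C v : ℚ) * (B v : ℚ) / 2)) l hnd
  rw [hsum, hsum2]
  -- counting identities
  have hconc : (univ.filter
        (fun p : Fin M × Fin M => y p.1 = 1 ∧ y p.2 = 0 ∧ s p.1 > s p.2)).card
      = ∑ v ∈ univ.image s, A v * B v := by
    rw [Finset.card_eq_sum_card_fiberwise
      (f := fun p : Fin M × Fin M => s p.2) (t := univ.image s)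
      (fun p _ => mem_image_of_mem s (mem_univ p.2))]
    apply Finset.sum_congr rfl
    intro v _
    rw [Finset.filter_filter]
    rw [show (univ.filter (fun p : Fin M × Fin M =>
          (y p.1 = 1 ∧ y p.2 = 0 ∧ s p.1 > s p.2) ∧ s p.2 = v))
        = (univ.filter (fun p : Fin M × Fin M =>
          (y p.1 = 1 ∧ v < s p.1) ∧ (y p.2 = 0 ∧ s p.2 = v))) by
      apply filter_congr
      rintro ⟨i, j⟩ _
      constructor
      · rintro ⟨⟨h1, h2, h3⟩, h4⟩
        exact ⟨⟨h1, h4 ▸ h3⟩, h2, h4⟩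
      · rintro ⟨⟨h1, h2⟩, h3, h4⟩
        exact ⟨⟨h1, h3, h4 ▸ h2⟩, h4⟩]
    rw [← Finset.univ_product_univ,
      Finset.filter_product (fun i : Fin M => y i = 1 ∧ v < s i)
        (fun j : Fin M => y j = 0 ∧ s j = v), Finset.card_product]
  have htied : (univ.filter
        (fun p : Fin M × Fin M => y p.1 = 1 ∧ y p.2 = 0 ∧ s p.1 = s p.2)).card
      = ∑ v ∈ univ.image s, C v * B v := by
    rw [Finset.card_eq_sum_card_fiberwise
      (f := fun p : Fin M × Fin M => s p.2) (t := univ.image s)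
      (fun p _ => mem_image_of_mem s (mem_univ p.2))]
    apply Finset.sum_congr rfl
    intro v _
    rw [Finset.filter_filter]
    rw [show (univ.filter (fun p : Fin M × Fin M =>
          (y p.1 = 1 ∧ y p.2 = 0 ∧ s p.1 = s p.2) ∧ s p.2 = v))
        = (univ.filter (fun p : Fin M × Fin M =>
          (y p.1 = 1 ∧ s p.1 = v) ∧ (y p.2 = 0 ∧ s p.2 = v))) by
      apply filter_congr
      rintro ⟨i, j⟩ _
      constructor
      · rintro ⟨⟨h1, h2, h3⟩, h4⟩
        exact ⟨⟨h1, h4 ▸ h3⟩, h2, h4⟩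
      · rintro ⟨⟨h1, h2⟩, h3, h4⟩
        exact ⟨⟨h1, h3, h2.trans h4.symm⟩, h4⟩]
    rw [← Finset.univ_product_univ,
      Finset.filter_product (fun i : Fin M => y i = 1 ∧ s i = v)
        (fun j : Fin M => y j = 0 ∧ s j = v), Finset.card_product]
  rw [hconc, htied]
  push_cast
  rw [Finset.sum_add_distrib, ← Finset.sum_div]
  ring
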